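/- Let d ≥ 2 and let U ⊆ ℝ^d be a bounded domain whose boundary ∂U is connected. Then U is full; equivalently, if a bounded domain U ⊆ ℝ^d is hollow, then ∂U is disconnected. -/

import Mathlib

/-- The topological hull `T(G)` of a set `G ⊆ ℝ^d`: the union of `G` with the
bounded connected components of the complement `ℝ^d \ G`. -/
def topHull {d : ℕ} (G : Set (EuclideanSpace ℝ (Fin d))) : Set (EuclideanSpace ℝ (Fin d)) :=
  G ∪ {x | x ∈ Gᶜ ∧ Bornology.IsBounded (connectedComponentIn Gᶜ x)}

open Set Bornology

/-- A connected component of a closed set is closed. -/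
lemma aux_isClosed_connectedComponentIn {X : Type*} [TopologicalSpace X] {F : Set X}
    (hF : IsClosed F) (x : X) : IsClosed (connectedComponentIn F x) := by
  by_cases hx : x ∈ F
  · have h1 : closure (connectedComponentIn F x) ⊆ connectedComponentIn F x := by
      apply IsPreconnected.subset_connectedComponentIn
        (isPreconnected_connectedComponentIn.closure)
        (subset_closure (mem_connectedComponentIn hx))
      exact hF.closure_subset_iff.mpr (connectedComponentIn_subset F x)
    exact isClosed_of_closure_subset h1
  · rw [connectedComponentIn_eq_empty hx]; exact isClosed_empty

/-- In a locally connected space, the frontier of a connected component of a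
closed set is contained in the frontier of the set. -/
lemma aux_frontier_connectedComponentIn {X : Type*} [TopologicalSpace X]
    [LocallyConnectedSpace X] {F : Set X} (hF : IsClosed F) (x : X) :
    frontier (connectedComponentIn F x) ⊆ frontier F := by
  by_cases hx : x ∈ F
  · intro z hz
    have hCcl : IsClosed (connectedComponentIn F x) := aux_isClosed_connectedComponentIn hF x
    have hzC : z ∈ connectedComponentIn F x := by
      rw [frontier, hCcl.closure_eq] at hz; exact hz.1
    have hzF : z ∈ F := connectedComponentIn_subset F x hzC
    refine ⟨subset_closure hzF, fun hzint => ?_⟩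
    -- z is in the interior of F; get a connected neighborhood inside F
    have hnhds : connectedComponentIn (interior F) z ∈ nhds z :=
      connectedComponentIn_mem_nhds (isOpen_interior.mem_nhds hzint)
    have hsub : connectedComponentIn (interior F) z ⊆ connectedComponentIn F x := by
      rw [connectedComponentIn_eq hzC]
      exact isPreconnected_connectedComponentIn.subset_connectedComponentIn
        (mem_connectedComponentIn hzint)
        ((connectedComponentIn_subset _ _).trans interior_subset)
    have : z ∈ interior (connectedComponentIn F x) :=
      mem_interior_iff_mem_nhds.mpr (Filter.mem_of_superset hnhds hsub)
    exact hz.2 this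
  · rw [connectedComponentIn_eq_empty hx]; simp

/-- If `U ⊆ ℝ^d` (`d ≥ 2`) is a bounded domain (nonempty connected open set) whose
boundary `∂U` is connected, then `U` is full, i.e. `T(U) = U`. Equivalently, a
bounded hollow domain has disconnected boundary. -/
theorem full_of_frontier_connected {d : ℕ} (hd : 2 ≤ d) (U : Set (EuclideanSpace ℝ (Fin d)))
    (hUopen : IsOpen U) (hUconn : IsConnected U) (hUbdd : Bornology.IsBounded U)
    (hfr : IsConnected (frontier U)) :
    topHull U = U := by
  have hFcl : IsClosed Uᶜ := hUopen.isClosed_compl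
  -- the key claim: no bounded component of the complement
  suffices key : ∀ x : EuclideanSpace ℝ (Fin d), x ∈ Uᶜ →
      ¬ IsBounded (connectedComponentIn Uᶜ x) by
    apply Set.union_eq_self_of_subset_right
    rintro x ⟨hx, hb⟩
    exact absurd hb (key x hx)
  intro x hx hb
  -- construct an unbounded ray in the complement
  obtain ⟨R, hR⟩ := hUbdd.exists_norm_le
  set R' : ℝ := max R 0 with hR'def
  have hR'0 : 0 ≤ R' := le_max_right _ _
  have e : EuclideanSpace ℝ (Fin d) := EuclideanSpace.single (⟨0, by omega⟩ : Fin d) (1 : ℝ)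
  have hnorme : ‖(EuclideanSpace.single (⟨0, by omega⟩ : Fin d) (1 : ℝ) :
      EuclideanSpace ℝ (Fin d))‖ = 1 := by
    rw [EuclideanSpace.norm_single]; simp
  set y : EuclideanSpace ℝ (Fin d) :=
    (R' + 1) • EuclideanSpace.single (⟨0, by omega⟩ : Fin d) (1 : ℝ) with hy
  have hnormy : ‖y‖ = R' + 1 := by
    rw [hy, norm_smul, hnorme, mul_one, Real.norm_eq_abs, abs_of_pos (by linarith)]
  set S : Set (EuclideanSpace ℝ (Fin d)) := (fun t : ℝ => t • y) '' Set.Ici 1 with hS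
  have hnormS : ∀ t : ℝ, 1 ≤ t → ‖t • y‖ = t * (R' + 1) := by
    intro t ht
    rw [norm_smul, hnormy, Real.norm_eq_abs, abs_of_pos (by linarith)]
  have hSsub : S ⊆ Uᶜ := by
    rintro _ ⟨t, ht, rfl⟩
    intro hU
    have := hR _ hU
    have ht' : (1:ℝ) ≤ t := ht
    rw [hnormS t ht'] at this
    nlinarith [le_max_left R 0, hR'0]
  have hSconn : IsPreconnected S :=
    (isPreconnected_Ici).image _ ((continuous_id.smul continuous_const).continuousOn)
  have hyS : y ∈ S := ⟨1, Set.mem_Ici.mpr le_rfl, one_smul ℝ y⟩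
  have hSunbdd : ¬ IsBounded S := by
    intro hSb
    obtain ⟨M, hM⟩ := hSb.exists_norm_le
    have h1 : (max 1 ((M + 1) / (R' + 1)) : ℝ) ∈ Set.Ici (1:ℝ) := Set.mem_Ici.mpr (le_max_left _ _)
    have := hM _ ⟨_, h1, rfl⟩
    rw [hnormS _ (le_max_left _ _)] at this
    have h2 : (M + 1) / (R' + 1) ≤ max 1 ((M + 1) / (R' + 1)) := le_max_right _ _
    have h3 : (M + 1) / (R' + 1) * (R' + 1) = M + 1 := by field_simp
    nlinarith [mul_le_mul_of_nonneg_right h2 (by linarith : (0:ℝ) ≤ R' + 1)]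
  -- the unbounded component
  have hyU : y ∈ Uᶜ := hSsub hyS
  have hCinfunbdd : ¬ IsBounded (connectedComponentIn Uᶜ y) := by
    intro hbb
    exact hSunbdd (hbb.subset (hSconn.subset_connectedComponentIn hyS hSsub))
  -- the frontier of U lives in a single component D of the complement
  obtain ⟨z₀, hz₀⟩ := hfr.nonempty
  have hfrsub : frontier U ⊆ Uᶜ := by
    rw [hUopen.frontier_eq]; exact fun z hz => hz.2
  have hfrD : frontier U ⊆ connectedComponentIn Uᶜ z₀ :=
    hfr.isPreconnected.subset_connectedComponentIn hz₀ hfrsub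
  -- a general fact: any component of the complement whose frontier is nonempty equals D
  have comp_eq : ∀ w : EuclideanSpace ℝ (Fin d), w ∈ Uᶜ →
      (frontier (connectedComponentIn Uᶜ w)).Nonempty →
      connectedComponentIn Uᶜ w = connectedComponentIn Uᶜ z₀ := by
    intro w hw ⟨z, hz⟩
    have hzC : z ∈ connectedComponentIn Uᶜ w := by
      have := (aux_isClosed_connectedComponentIn hFcl w).closure_eq
      rw [frontier, this] at hz; exact hz.1
    have hzfrU : z ∈ frontier U := by
      have := aux_frontier_connectedComponentIn hFcl w hz
      rwa [frontier_compl] at this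
    have hzD : z ∈ connectedComponentIn Uᶜ z₀ := hfrD hzfrU
    rw [connectedComponentIn_eq hzC, connectedComponentIn_eq hzD]
  -- frontier of the bounded component C is nonempty
  have hCne : (connectedComponentIn Uᶜ x).Nonempty := ⟨x, mem_connectedComponentIn hx⟩
  have hCfr : (frontier (connectedComponentIn Uᶜ x)).Nonempty := by
    rw [Set.nonempty_iff_ne_empty]
    intro hfe
    rcases frontier_eq_empty_iff.mp hfe with h | h
    · rw [h] at hCne; exact Set.not_nonempty_empty hCne
    · rw [h] at hb
      exact hSunbdd (hb.subset (Set.subset_univ S))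
  -- frontier of the unbounded component C∞ is nonempty
  have hCinffr : (frontier (connectedComponentIn Uᶜ y)).Nonempty := by
    rw [Set.nonempty_iff_ne_empty]
    intro hfe
    rcases frontier_eq_empty_iff.mp hfe with h | h
    · have : y ∈ connectedComponentIn Uᶜ y := mem_connectedComponentIn hyU
      rw [h] at this; exact this
    · obtain ⟨u, hu⟩ := hUconn.nonempty
      have : u ∈ Uᶜ := connectedComponentIn_subset Uᶜ y (h ▸ Set.mem_univ u)
      exact this hu
  -- both components equal D, contradiction bounded vs unbounded
  have h1 := comp_eq x hx hCfr
  have h2 := comp_eq y hyU hCinffr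
  rw [h1, ← h2] at hb
  exact hCinfunbdd hb
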